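/- Let n ≥ 3 and 1 ≤ p ≤ n−1. Let E be a real symmetric n×n matrix with vanishing trace, let α be a totally antisymmetric map on p-tuples of indices from {1,…,n}, and let R be a real number satisfying R ≥ √((n−1)/n) · (n(n−1)|n−2p|/((n−p)(n−2))) · ‖E‖_F. Then ((n−2p)/(n−2))·∑_{i,j,i₂,…,i_p=1}^{n} E_{ij} α(i,i₂,…,i_p) α(j,i₂,…,i_p) + ((n−p)·R/(n(n−1)))·|α|² ≥ 0. -/

import Mathlib

/-- Sharp quadratic-form bound for a traceless matrix. -/
lemma quad_bound (n : ℕ) (hn : 0 < n) (E : Matrix (Fin n) (Fin n) ℝ)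
    (htrace : ∑ i, E i i = 0) (v : Fin n → ℝ) :
    |∑ i, ∑ j, E i j * v i * v j| ≤
      Real.sqrt (((n : ℝ) - 1) / n) * Real.sqrt (∑ i, ∑ j, (E i j) ^ 2) *
        (∑ i, v i ^ 2) := by
  set s : ℝ := ∑ i, v i ^ 2 with hs
  have hs0 : 0 ≤ s := Finset.sum_nonneg fun i _ => sq_nonneg _
  have hn0 : (0 : ℝ) < n := by exact_mod_cast hn
  set c : ℝ := s / n with hc
  set M : Fin n → Fin n → ℝ := fun i j => v i * v j - if i = j then c else 0 with hM
  -- Cauchy–Schwarz over pairs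
  have cs := Finset.sum_mul_sq_le_sq_mul_sq Finset.univ
      (fun x : Fin n × Fin n => E x.1 x.2) (fun x : Fin n × Fin n => M x.1 x.2)
  simp only [Fintype.sum_prod_type] at cs
  -- the E-M pairing equals the quadratic form
  have h1 : ∑ i, ∑ j, E i j * M i j = ∑ i, ∑ j, E i j * v i * v j := by
    have : ∀ i : Fin n, ∑ j, E i j * M i j
        = (∑ j, E i j * v i * v j) - E i i * c := by
      intro i
      simp only [hM, mul_sub]
      rw [Finset.sum_sub_distrib]
      congr 1
      · exact Finset.sum_congr rfl fun j _ => by ring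
      · simp [mul_ite]
    rw [Finset.sum_congr rfl fun i _ => this i, Finset.sum_sub_distrib,
      ← Finset.sum_mul, htrace]
    ring
  -- the norm of M
  have h2 : ∑ i, ∑ j, (M i j) ^ 2 = ((n : ℝ) - 1) / n * s ^ 2 := by
    have expand : ∀ i j : Fin n, (M i j) ^ 2
        = v i ^ 2 * v j ^ 2 - (2 * c * (v i * v j) - c ^ 2) * (if i = j then 1 else 0) := by
      intro i j
      by_cases h : i = j <;> simp [hM, h] <;> ring
    have hrow : ∀ i : Fin n, ∑ j, (M i j) ^ 2
        = v i ^ 2 * s - (2 * c * (v i * v i) - c ^ 2) := by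
      intro i
      rw [Finset.sum_congr rfl fun j _ => expand i j, Finset.sum_sub_distrib]
      congr 1
      · rw [← Finset.mul_sum]
      · simp [mul_ite]
    rw [Finset.sum_congr rfl fun i _ => hrow i, Finset.sum_sub_distrib,
      ← Finset.sum_mul, Finset.sum_sub_distrib]
    have : ∑ i : Fin n, v i * v i = s := by
      rw [hs]; exact Finset.sum_congr rfl fun i _ => (sq (v i)).symm
    rw [← Finset.mul_sum, this]
    simp only [Finset.sum_const, Finset.card_univ, Fintype.card_fin, nsmul_eq_mul]
    rw [hc]
    field_simp
    ring
  rw [h1, h2] at cs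
  have hE0 : (0 : ℝ) ≤ ∑ i, ∑ j, (E i j) ^ 2 :=
    Finset.sum_nonneg fun i _ => Finset.sum_nonneg fun j _ => sq_nonneg _
  have hq0 : (0 : ℝ) ≤ ((n : ℝ) - 1) / n := by
    apply div_nonneg _ (le_of_lt hn0)
    have : (1 : ℝ) ≤ n := by exact_mod_cast hn
    linarith
  calc |∑ i, ∑ j, E i j * v i * v j|
      = Real.sqrt ((∑ i, ∑ j, E i j * v i * v j) ^ 2) := (Real.sqrt_sq_eq_abs _).symm
    _ ≤ Real.sqrt ((∑ i, ∑ j, (E i j) ^ 2) * (((n : ℝ) - 1) / n * s ^ 2)) :=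
        Real.sqrt_le_sqrt cs
    _ = Real.sqrt (((n : ℝ) - 1) / n) * Real.sqrt (∑ i, ∑ j, (E i j) ^ 2) * s := by
        rw [Real.sqrt_mul hE0, Real.sqrt_mul hq0, Real.sqrt_sq hs0]
        ring

/-- The pointwise algebraic core of Theorem 4.1: if the scalar curvature `R`
satisfies `R ≥ √((n-1)/n) · (n(n-1)|n-2p|/((n-p)(n-2))) · ‖E‖_F` for the
traceless Ricci tensor `E`, then the Weitzenböck curvature term of any
harmonic `p`-form is nonnegative. -/
theorem stmt_9 (n p : ℕ) (hn : 3 ≤ n) (hp : 1 ≤ p) (hpn : p ≤ n - 1)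
    (E : Matrix (Fin n) (Fin n) ℝ) (hsymm : ∀ i j, E i j = E j i)
    (htrace : ∑ i, E i i = 0)
    (α : (Fin p → Fin n) → ℝ)
    (hanti : ∀ (I : Fin p → Fin n) (k l : Fin p), k ≠ l →
      α (I ∘ Equiv.swap k l) = -α I)
    (R : ℝ)
    (hR : R ≥ Real.sqrt (((n : ℝ) - 1) / n) *
        ((n : ℝ) * ((n : ℝ) - 1) * |(n : ℝ) - 2 * (p : ℝ)| /
          (((n : ℝ) - (p : ℝ)) * ((n : ℝ) - 2))) *
        Real.sqrt (∑ i, ∑ j, (E i j) ^ 2)) :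
    0 ≤ (((n : ℝ) - 2 * (p : ℝ)) / ((n : ℝ) - 2)) *
          (∑ I : Fin p → Fin n, ∑ j : Fin n,
            E (I ⟨0, hp⟩) j * α I * α (Function.update I ⟨0, hp⟩ j)) +
        (((n : ℝ) - (p : ℝ)) * R / ((n : ℝ) * ((n : ℝ) - 1))) *
          ∑ I : Fin p → Fin n, (α I) ^ 2 := by
  have hn0 : 0 < n := by omega
  set z : Fin p := ⟨0, hp⟩ with hz
  set e := Equiv.funSplitAt z (Fin n) with he
  set v : ({ j : Fin p // j ≠ z } → Fin n) → Fin n → ℝ :=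
    fun r i => α (e.symm (i, r)) with hv
  -- basic facts about e.symm
  have fact1 : ∀ (a : Fin n) (r : { j : Fin p // j ≠ z } → Fin n),
      e.symm (a, r) z = a := by
    intro a r; simp [he]
  have fact2 : ∀ (a : Fin n) (r : { j : Fin p // j ≠ z } → Fin n) (j : Fin n),
      Function.update (e.symm (a, r)) z j = e.symm (j, r) := by
    intro a r j
    funext i
    rcases eq_or_ne i z with h | h
    · subst h; simp [he]
    · rw [Function.update_of_ne h]
      simp [he, h]
  set S : ℝ := ∑ I : Fin p → Fin n, ∑ j : Fin n,
      E (I z) j * α I * α (Function.update I z j) with hS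
  set A : ℝ := ∑ I : Fin p → Fin n, (α I) ^ 2 with hA
  set Q : ℝ := Real.sqrt (∑ i, ∑ j, (E i j) ^ 2) with hQ
  set sq : ℝ := Real.sqrt (((n : ℝ) - 1) / n) with hsq
  have hQ0 : 0 ≤ Q := Real.sqrt_nonneg _
  have hsq0 : 0 ≤ sq := Real.sqrt_nonneg _
  have hA0 : 0 ≤ A := Finset.sum_nonneg fun i _ => sq_nonneg _
  -- reindex S
  have hSr : S = ∑ r : { j : Fin p // j ≠ z } → Fin n,
      ∑ a : Fin n, ∑ j : Fin n, E a j * v r a * v r j := by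
    rw [hS, ← Equiv.sum_comp e.symm
      (fun I => ∑ j : Fin n, E (I z) j * α I * α (Function.update I z j)),
      Fintype.sum_prod_type]
    rw [Finset.sum_comm]
    refine Finset.sum_congr rfl fun r _ => Finset.sum_congr rfl fun a _ =>
      Finset.sum_congr rfl fun j _ => ?_
    rw [fact1, fact2]
  -- reindex A
  have hAr : A = ∑ r : { j : Fin p // j ≠ z } → Fin n, ∑ a : Fin n, v r a ^ 2 := by
    rw [hA, ← Equiv.sum_comp e.symm (fun I => (α I) ^ 2), Fintype.sum_prod_type,
      Finset.sum_comm]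
  -- bound |S|
  have hSb : |S| ≤ sq * Q * A := by
    rw [hSr, hAr]
    calc |∑ r, ∑ a, ∑ j, E a j * v r a * v r j|
        ≤ ∑ r, |∑ a, ∑ j, E a j * v r a * v r j| :=
          Finset.abs_sum_le_sum_abs _ _
      _ ≤ ∑ r : { j : Fin p // j ≠ z } → Fin n, sq * Q * (∑ a, v r a ^ 2) :=
          Finset.sum_le_sum fun r _ => quad_bound n hn0 E htrace (v r)
      _ = sq * Q * ∑ r : { j : Fin p // j ≠ z } → Fin n, ∑ a, v r a ^ 2 := by
          rw [← Finset.mul_sum]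
  -- arithmetic
  have hnR : (3 : ℝ) ≤ n := by exact_mod_cast hn
  have hpR : (p : ℝ) ≤ (n : ℝ) - 1 := by
    have : p + 1 ≤ n := by omega
    have := (Nat.cast_le (α := ℝ)).2 this
    push_cast at this; linarith
  have hnp : (0 : ℝ) < (n : ℝ) - p := by linarith
  have hn2 : (0 : ℝ) < (n : ℝ) - 2 := by linarith
  have hn1 : (0 : ℝ) < (n : ℝ) * ((n : ℝ) - 1) := by nlinarith
  have habs0 : (0 : ℝ) ≤ |(n : ℝ) - 2 * p| := abs_nonneg _
  -- lower bound for the coefficient of A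
  have hc2 : ((n : ℝ) - p) * R / ((n : ℝ) * ((n : ℝ) - 1))
      ≥ sq * (|(n : ℝ) - 2 * p| / ((n : ℝ) - 2)) * Q := by
    rw [ge_iff_le, le_div_iff₀ hn1]
    have hRb : sq * ((n : ℝ) * ((n : ℝ) - 1) * |(n : ℝ) - 2 * p| /
        (((n : ℝ) - p) * ((n : ℝ) - 2))) * Q ≤ R := hR
    have key : sq * (|(n : ℝ) - 2 * p| / ((n : ℝ) - 2)) * Q * ((n : ℝ) * ((n : ℝ) - 1))
        = ((n : ℝ) - p) * (sq * ((n : ℝ) * ((n : ℝ) - 1) * |(n : ℝ) - 2 * p| /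
          (((n : ℝ) - p) * ((n : ℝ) - 2))) * Q) := by
      field_simp
    rw [key]
    exact mul_le_mul_of_nonneg_left hRb (le_of_lt hnp)
  -- bound the S term
  have hc1S : (((n : ℝ) - 2 * p) / ((n : ℝ) - 2)) * S
      ≥ -(|(n : ℝ) - 2 * p| / ((n : ℝ) - 2) * (sq * Q * A)) := by
    have h1 : (((n : ℝ) - 2 * p) / ((n : ℝ) - 2)) * S
        ≥ -(|((n : ℝ) - 2 * p) / ((n : ℝ) - 2)| * |S|) := by
      have := neg_abs_le ((((n : ℝ) - 2 * p) / ((n : ℝ) - 2)) * S)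
      rw [abs_mul] at this
      linarith
    have h2 : |((n : ℝ) - 2 * p) / ((n : ℝ) - 2)| = |(n : ℝ) - 2 * p| / ((n : ℝ) - 2) := by
      rw [abs_div, abs_of_pos hn2]
    rw [h2] at h1
    have h3 : |(n : ℝ) - 2 * p| / ((n : ℝ) - 2) * |S|
        ≤ |(n : ℝ) - 2 * p| / ((n : ℝ) - 2) * (sq * Q * A) := by
      apply mul_le_mul_of_nonneg_left hSb
      positivity
    linarith
  have hc2A : (((n : ℝ) - p) * R / ((n : ℝ) * ((n : ℝ) - 1))) * A
      ≥ sq * (|(n : ℝ) - 2 * p| / ((n : ℝ) - 2)) * Q * A :=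
    mul_le_mul_of_nonneg_right hc2 hA0
  have : sq * (|(n : ℝ) - 2 * p| / ((n : ℝ) - 2)) * Q * A
      = |(n : ℝ) - 2 * p| / ((n : ℝ) - 2) * (sq * Q * A) := by ring
  linarith [hc1S, hc2A, this ▸ hc2A]
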